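/- Under the constraint (1/n) Σ_i ν_i = μ, the minimization of F(ν, α) = (1/(2n²)) Σ_{i,j} [(z_{ij}⁺ - (ν_i - ν_j + α))² + (z_{ij}⁻ - (ν_i - ν_j - α))²] over (ν, α) with α ≥ 0 has the unique solution ν_k* = μ + (1/n) Σ_j c_{kj} and α* = (1/(2n²)) Σ_{i,j} ℓ_{ij}, where c_{kj} = (z_{kj}⁺ + z_{kj}⁻)/2 and ℓ_{ij} = z_{ij}⁺ - z_{ij}⁻, assuming Z is a reciprocal interval matrix. -/

import Mathlib

open Finset in
/-- The least-squares objective of Model (M_{l₂}):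
F(ν,α) = (1/(2n²)) Σ_{i,j} [(z_{ij}⁺ - (ν_i - ν_j + α))² + (z_{ij}⁻ - (ν_i - ν_j - α))²]. -/
noncomputable def Fobj (n : ℕ) (z : Fin n → Fin n → ℝ × ℝ)
    (ν : Fin n → ℝ) (α : ℝ) : ℝ :=
  (1 / (2 * (n : ℝ) ^ 2)) * ∑ i : Fin n, ∑ j : Fin n,
    (((z i j).2 - (ν i - ν j + α)) ^ 2 +
     ((z i j).1 - (ν i - ν j - α)) ^ 2)

open Finset in
/-- under the constraint (1/n)Σ ν_i = μ and α ≥ 0, F is minimized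
uniquely at ν_k* = μ + (1/n)Σ_j c_{kj}, α* = (1/(2n²)) Σ_{i,j} ℓ_{ij}, for a
reciprocal interval matrix Z. -/
theorem constrained_minimizer_unique (n : ℕ) (hn : 0 < n)
    (z : Fin n → Fin n → ℝ × ℝ) (μ : ℝ)
    (hvalid : ∀ i j, (z i j).1 ≤ (z i j).2)
    (hrec : ∀ i j, (z i j).2 = -(z j i).1 ∧ (z i j).1 = -(z j i).2) :
    let νstar : Fin n → ℝ := fun k =>
      μ + (1 / (n : ℝ)) * ∑ j : Fin n, ((z k j).2 + (z k j).1) / 2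
    let αstar : ℝ := (1 / (2 * (n : ℝ) ^ 2)) * ∑ i : Fin n, ∑ j : Fin n,
      ((z i j).2 - (z i j).1)
    ((1 / (n : ℝ)) * ∑ i : Fin n, νstar i = μ) ∧ 0 ≤ αstar ∧
    (∀ (ν : Fin n → ℝ) (α : ℝ), (1 / (n : ℝ)) * ∑ i : Fin n, ν i = μ → 0 ≤ α →
      Fobj n z νstar αstar ≤ Fobj n z ν α) ∧
    (∀ (ν : Fin n → ℝ) (α : ℝ), (1 / (n : ℝ)) * ∑ i : Fin n, ν i = μ → 0 ≤ α →
      (∀ (ν' : Fin n → ℝ) (α' : ℝ),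
        (1 / (n : ℝ)) * ∑ i : Fin n, ν' i = μ → 0 ≤ α' →
          Fobj n z ν α ≤ Fobj n z ν' α') →
      ν = νstar ∧ α = αstar) := by
  intro νstar αstar
  have hn' : (n:ℝ) ≠ 0 := Nat.cast_ne_zero.mpr hn.ne'
  have hnpos : (0:ℝ) < n := Nat.cast_pos.mpr hn
  set c : Fin n → Fin n → ℝ := fun i j => ((z i j).2 + (z i j).1) / 2 with hc
  have hν : ∀ k, νstar k = μ + (1/(n:ℝ)) * ∑ j : Fin n, c k j := fun k => rfl
  have hαdef : αstar = (1/(2*(n:ℝ)^2)) * ∑ i : Fin n, ∑ j : Fin n,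
      ((z i j).2 - (z i j).1) := rfl
  have hcanti : ∀ i j, c i j = -c j i := by
    intro i j
    simp only [hc]
    rw [(hrec i j).1, (hrec i j).2]; ring
  -- total sum of c is zero
  have hS : ∑ i : Fin n, ∑ j : Fin n, c i j = 0 := by
    have h1 : ∑ i : Fin n, ∑ j : Fin n, c i j = ∑ j : Fin n, ∑ i : Fin n, c i j :=
      Finset.sum_comm
    have h2 : ∑ j : Fin n, ∑ i : Fin n, c i j
        = -∑ j : Fin n, ∑ i : Fin n, c j i := by
      rw [← Finset.sum_neg_distrib]
      refine Finset.sum_congr rfl fun j _ => ?_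
      rw [← Finset.sum_neg_distrib]
      exact Finset.sum_congr rfl fun i _ => hcanti i j
    linarith [h1, h2]
  -- row sums of c
  have hcrow : ∀ i, ∑ j : Fin n, c i j = (n:ℝ) * (νstar i - μ) := by
    intro i
    have h := hν i
    field_simp at h
    linarith
  have hstarsum : ∑ i : Fin n, νstar i = (n:ℝ) * μ := by
    have : ∑ i : Fin n, νstar i
        = ∑ i : Fin n, (μ + (1/(n:ℝ)) * ∑ j : Fin n, c i j) :=
      Finset.sum_congr rfl fun i _ => hν i
    rw [this, Finset.sum_add_distrib, ← Finset.mul_sum, hS, Finset.sum_const,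
      Finset.card_univ, Fintype.card_fin, nsmul_eq_mul]
    ring
  have hconj1 : (1 / (n : ℝ)) * ∑ i : Fin n, νstar i = μ := by
    rw [hstarsum]; field_simp
  have hα0 : 0 ≤ αstar := by
    rw [hαdef]
    apply mul_nonneg (by positivity)
    exact Finset.sum_nonneg fun i _ => Finset.sum_nonneg fun j _ =>
      sub_nonneg.mpr (hvalid i j)
  -- decomposition of Fobj
  have hF : ∀ (ν : Fin n → ℝ) (α : ℝ), Fobj n z ν α
      = (1/(n:ℝ)^2) * ((∑ i : Fin n, ∑ j : Fin n, (c i j - (ν i - ν j))^2)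
        + ∑ i : Fin n, ∑ j : Fin n, (((z i j).2 - (z i j).1)/2 - α)^2) := by
    intro ν α
    unfold Fobj
    have hpt : ∀ i j, ((z i j).2 - (ν i - ν j + α)) ^ 2 +
        ((z i j).1 - (ν i - ν j - α)) ^ 2
        = 2*(c i j - (ν i - ν j))^2 + 2*(((z i j).2 - (z i j).1)/2 - α)^2 := by
      intro i j; simp only [hc]; ring
    rw [show (∑ i : Fin n, ∑ j : Fin n,
        (((z i j).2 - (ν i - ν j + α)) ^ 2 + ((z i j).1 - (ν i - ν j - α)) ^ 2))
      = ∑ i : Fin n, ∑ j : Fin n,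
        (2*(c i j - (ν i - ν j))^2 + 2*(((z i j).2 - (z i j).1)/2 - α)^2) from
      Finset.sum_congr rfl fun i _ => Finset.sum_congr rfl fun j _ => hpt i j]
    simp_rw [Finset.sum_add_distrib, ← Finset.mul_sum]
    field_simp
  -- the ℓ-part identity
  have hM : ∑ i : Fin n, ∑ j : Fin n, ((z i j).2 - (z i j).1)
      = 2*(n:ℝ)^2*αstar := by
    rw [hαdef]; field_simp
  have hL : ∀ α : ℝ,
      ∑ i : Fin n, ∑ j : Fin n, (((z i j).2 - (z i j).1)/2 - α)^2
      = (∑ i : Fin n, ∑ j : Fin n, (((z i j).2 - (z i j).1)/2 - αstar)^2)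
        + (n:ℝ)^2*(α - αstar)^2 := by
    intro α
    have expand : ∀ t : ℝ,
        ∑ i : Fin n, ∑ j : Fin n, (((z i j).2 - (z i j).1)/2 - t)^2
        = (∑ i : Fin n, ∑ j : Fin n, (((z i j).2 - (z i j).1)/2)^2)
          - t * (∑ i : Fin n, ∑ j : Fin n, ((z i j).2 - (z i j).1))
          + (n:ℝ)^2 * t^2 := by
      intro t
      have row : ∀ i : Fin n, ∑ j : Fin n, (((z i j).2 - (z i j).1)/2 - t)^2
          = (∑ j : Fin n, (((z i j).2 - (z i j).1)/2)^2)
            - t * (∑ j : Fin n, ((z i j).2 - (z i j).1)) + (n:ℝ) * t^2 := by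
        intro i
        have h : ∀ j : Fin n, (((z i j).2 - (z i j).1)/2 - t)^2
            = (((z i j).2 - (z i j).1)/2)^2 - t*((z i j).2 - (z i j).1) + t^2 :=
          fun j => by ring
        rw [Finset.sum_congr rfl fun j _ => h j, Finset.sum_add_distrib,
          Finset.sum_sub_distrib, ← Finset.mul_sum, Finset.sum_const,
          Finset.card_univ, Fintype.card_fin, nsmul_eq_mul]
      rw [Finset.sum_congr rfl fun i _ => row i, Finset.sum_add_distrib,
        Finset.sum_sub_distrib, ← Finset.mul_sum, Finset.sum_const,
        Finset.card_univ, Fintype.card_fin, nsmul_eq_mul]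
      ring
    rw [expand α, expand αstar, hM]; ring
  -- the ν-part identity
  have hQ : ∀ (ν : Fin n → ℝ), (1 / (n : ℝ)) * ∑ i : Fin n, ν i = μ →
      ∑ i : Fin n, ∑ j : Fin n, (c i j - (ν i - ν j))^2
      = (∑ i : Fin n, ∑ j : Fin n, (c i j - (νstar i - νstar j))^2)
        + 2*(n:ℝ)*∑ i : Fin n, (ν i - νstar i)^2 := by
    intro ν hνc
    set e : Fin n → ℝ := fun i => ν i - νstar i with he
    have hesum : ∑ i : Fin n, e i = 0 := by
      simp only [he]
      rw [Finset.sum_sub_distrib, hstarsum]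
      field_simp at hνc
      linarith
    set r : Fin n → Fin n → ℝ := fun i j => c i j - (νstar i - νstar j) with hr
    have hrow : ∀ i, ∑ j : Fin n, r i j = 0 := by
      intro i
      simp only [hr]
      rw [Finset.sum_sub_distrib, Finset.sum_sub_distrib, hcrow i, hstarsum,
        Finset.sum_const, Finset.card_univ, Fintype.card_fin, nsmul_eq_mul]
      ring
    have hranti : ∀ i j, r i j = -r j i := by
      intro i j; simp only [hr]; rw [hcanti i j]; ring
    have hcol : ∀ j, ∑ i : Fin n, r i j = 0 := by
      intro j
      have : ∑ i : Fin n, r i j = -∑ i : Fin n, r j i := by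
        rw [← Finset.sum_neg_distrib]
        exact Finset.sum_congr rfl fun i _ => hranti i j
      rw [this, hrow j, neg_zero]
    have hX1 : ∑ i : Fin n, ∑ j : Fin n, r i j * e i = 0 := by
      refine Finset.sum_eq_zero fun i _ => ?_
      rw [← Finset.sum_mul, hrow i, zero_mul]
    have hX2 : ∑ i : Fin n, ∑ j : Fin n, r i j * e j = 0 := by
      rw [Finset.sum_comm]
      refine Finset.sum_eq_zero fun j _ => ?_
      rw [← Finset.sum_mul, hcol j, zero_mul]
    have hY : ∑ i : Fin n, ∑ j : Fin n, (e i - e j)^2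
        = 2*(n:ℝ)*∑ i : Fin n, e i^2 := by
      have hinner : ∀ i : Fin n, ∑ j : Fin n, (e i - e j)^2
          = (n:ℝ) * e i^2 + ∑ j : Fin n, e j^2 := by
        intro i
        have : ∀ j : Fin n, (e i - e j)^2
            = e i^2 - (2*e i)*e j + e j^2 := fun j => by ring
        simp_rw [this, Finset.sum_add_distrib, Finset.sum_sub_distrib,
          ← Finset.mul_sum, hesum, Finset.sum_const, Finset.card_univ,
          Fintype.card_fin, nsmul_eq_mul]
        ring
      rw [Finset.sum_congr rfl fun i _ => hinner i, Finset.sum_add_distrib,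
        ← Finset.mul_sum, Finset.sum_const, Finset.card_univ, Fintype.card_fin,
        nsmul_eq_mul]
      ring
    have hsplit : ∀ i j : Fin n, (c i j - (ν i - ν j))^2
        = r i j^2 - 2*(r i j * e i) + 2*(r i j * e j) + (e i - e j)^2 := by
      intro i j; simp only [hr, he]; ring
    calc ∑ i : Fin n, ∑ j : Fin n, (c i j - (ν i - ν j))^2
        = ∑ i : Fin n, ∑ j : Fin n,
          (r i j^2 - 2*(r i j * e i) + 2*(r i j * e j) + (e i - e j)^2) :=
          Finset.sum_congr rfl fun i _ => Finset.sum_congr rfl fun j _ => hsplit i j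
      _ = (∑ i : Fin n, ∑ j : Fin n, r i j^2)
          - 2*(∑ i : Fin n, ∑ j : Fin n, r i j * e i)
          + 2*(∑ i : Fin n, ∑ j : Fin n, r i j * e j)
          + ∑ i : Fin n, ∑ j : Fin n, (e i - e j)^2 := by
          simp_rw [Finset.sum_add_distrib, Finset.sum_sub_distrib,
            ← Finset.mul_sum]
      _ = (∑ i : Fin n, ∑ j : Fin n, (c i j - (νstar i - νstar j))^2)
          + 2*(n:ℝ)*∑ i : Fin n, e i^2 := by
          rw [hX1, hX2, hY]; simp only [hr]; ring
  -- the master identity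
  have hkey : ∀ (ν : Fin n → ℝ) (α : ℝ), (1 / (n : ℝ)) * ∑ i : Fin n, ν i = μ →
      Fobj n z ν α = Fobj n z νstar αstar
        + (2/(n:ℝ)) * ∑ i : Fin n, (ν i - νstar i)^2 + (α - αstar)^2 := by
    intro ν α hνc
    rw [hF ν α, hF νstar αstar, hL α, hQ ν hνc]
    field_simp
    ring
  refine ⟨hconj1, hα0, ?_, ?_⟩
  · intro ν α hνc _
    rw [hkey ν α hνc]
    have h1 : 0 ≤ (2/(n:ℝ)) * ∑ i : Fin n, (ν i - νstar i)^2 :=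
      mul_nonneg (by positivity) (Finset.sum_nonneg fun i _ => sq_nonneg _)
    nlinarith [sq_nonneg (α - αstar)]
  · intro ν α hνc hα hmin
    have hle := hmin νstar αstar hconj1 hα0
    rw [hkey ν α hνc] at hle
    have h1 : 0 ≤ ∑ i : Fin n, (ν i - νstar i)^2 :=
      Finset.sum_nonneg fun i _ => sq_nonneg _
    have h2 : 0 ≤ (α - αstar)^2 := sq_nonneg _
    have h2n : (0:ℝ) < 2/(n:ℝ) := by positivity
    have h1' : 0 ≤ (2/(n:ℝ)) * ∑ i : Fin n, (ν i - νstar i)^2 :=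
      mul_nonneg h2n.le h1
    have h3 : (2/(n:ℝ)) * ∑ i : Fin n, (ν i - νstar i)^2 + (α - αstar)^2 ≤ 0 := by
      linarith
    have hα2 : (α - αstar)^2 = 0 := le_antisymm (by linarith) h2
    have hmul0 : (2/(n:ℝ)) * ∑ i : Fin n, (ν i - νstar i)^2 = 0 := by linarith
    have hsum0 : ∑ i : Fin n, (ν i - νstar i)^2 = 0 :=
      (mul_eq_zero.1 hmul0).resolve_left h2n.ne'
    constructor
    · funext i
      have := (Finset.sum_eq_zero_iff_of_nonneg
        (fun i _ => sq_nonneg (ν i - νstar i))).1 hsum0 i (Finset.mem_univ i)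
      have := sq_eq_zero_iff.1 this
      linarith [this]
    · have := sq_eq_zero_iff.1 hα2
      linarith [this]
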